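/- Under the hypotheses of the convergence theorem for Iterative Normalization (all iterates nonzero), the sequence is asymptotically regular: the displacement between consecutive iterates tends to zero, i.e., Σᵢ ‖xᵢ⁽ᵏ⁺¹⁾ − xᵢ⁽ᵏ⁾‖₂² → 0 as k → ∞. -/

import Mathlib

open Filter Finset
open scoped RealInnerProductSpace

/-- Asymptotic regularity of Iterative Normalization: the squared Frobenius
displacement between consecutive iterates tends to zero. -/
theorem iterative_normalization_asymptotically_regular
    (d n : ℕ) (hd : 0 < d) (hn : 1 ≤ n)
    (X : ℕ → Fin n → EuclideanSpace ℝ (Fin d))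
    (hrec : ∀ k : ℕ, ∀ i : Fin n,
      X (k + 1) i =
        (‖X k i‖)⁻¹ • X k i -
          (n : ℝ)⁻¹ • ∑ j : Fin n, (‖X k j‖)⁻¹ • X k j)
    (hnz : ∀ k : ℕ, ∀ i : Fin n, X k i ≠ 0) :
    Tendsto (fun k => ∑ i : Fin n, ‖X (k + 1) i - X k i‖ ^ 2) atTop (nhds 0) := by
  classical
  have hn0 : (n : ℝ) ≠ 0 := Nat.cast_ne_zero.mpr (by omega)
  set Y : ℕ → Fin n → EuclideanSpace ℝ (Fin d) := fun k i => (‖X k i‖)⁻¹ • X k i with hYdef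
  set M : ℕ → EuclideanSpace ℝ (Fin d) := fun k => (n : ℝ)⁻¹ • ∑ j : Fin n, Y k j with hMdef
  have hrec' : ∀ k i, X (k + 1) i = Y k i - M k := fun k i => hrec k i
  have hnormY : ∀ k i, ‖Y k i‖ = 1 := by
    intro k i
    have h : ‖X k i‖ ≠ 0 := norm_ne_zero_iff.mpr (hnz k i)
    simp [hYdef, norm_smul, Real.norm_eq_abs, abs_inv, abs_norm, inv_mul_cancel₀ h]
  -- iterates after the first step sum to zero
  have hsum : ∀ k, ∑ i : Fin n, X (k + 1) i = 0 := by
    intro k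
    have h1 : ∑ i : Fin n, X (k + 1) i = (∑ i : Fin n, Y k i) - (n : ℝ) • M k := by
      simp only [hrec', Finset.sum_sub_distrib, Finset.sum_const, Finset.card_univ,
        Fintype.card_fin]
      congr 1
      rw [← Nat.cast_smul_eq_nsmul ℝ]
    rw [h1, hMdef]
    simp [smul_smul, mul_inv_cancel₀ hn0]
  set a : ℕ → ℝ := fun k => ∑ i : Fin n, ‖X k i - Y k i‖ ^ 2 with hadef
  set b : ℕ → ℝ := fun k => ∑ i : Fin n, ‖Y k i - X (k + 1) i‖ ^ 2 with hbdef
  have hDnonneg : ∀ k : ℕ, 0 ≤ ∑ i : Fin n, ‖X (k + 1) i - X k i‖ ^ 2 :=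
    fun k => Finset.sum_nonneg fun i _ => sq_nonneg _
  have hanonneg : ∀ k, 0 ≤ a k := fun k => Finset.sum_nonneg fun i _ => sq_nonneg _
  -- key identity: Pythagoras for the centering step
  have key1 : ∀ k, a (k + 1) = (∑ i : Fin n, ‖X (k + 2) i - X (k + 1) i‖ ^ 2) + b (k + 1) := by
    intro k
    have h1 : ∑ i : Fin n, X (k + 1) i = 0 := hsum k
    have h2 : ∑ i : Fin n, X (k + 2) i = 0 := hsum (k + 1)
    have expand : ∀ i : Fin n, ‖X (k + 1) i - Y (k + 1) i‖ ^ 2 =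
        ‖X (k + 2) i - X (k + 1) i‖ ^ 2 +
          2 * (inner ℝ (X (k + 1) i - X (k + 2) i) (X (k + 2) i - Y (k + 1) i) : ℝ) +
          ‖Y (k + 1) i - X (k + 2) i‖ ^ 2 := by
      intro i
      have h3 : X (k + 1) i - Y (k + 1) i =
          (X (k + 1) i - X (k + 2) i) + (X (k + 2) i - Y (k + 1) i) := by abel
      rw [h3, norm_add_sq_real, norm_sub_rev (X (k + 1) i) (X (k + 2) i),
        norm_sub_rev (X (k + 2) i) (Y (k + 1) i)]
    have hcross : ∑ i : Fin n, (inner ℝ (X (k + 1) i - X (k + 2) i) (X (k + 2) i - Y (k + 1) i) : ℝ) = 0 := by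
      have hc : ∀ i : Fin n, X (k + 2) i - Y (k + 1) i = -M (k + 1) := by
        intro i
        rw [show (k:ℕ) + 2 = (k + 1) + 1 from rfl, hrec' (k + 1) i]
        abel
      calc ∑ i : Fin n, (inner ℝ (X (k + 1) i - X (k + 2) i) (X (k + 2) i - Y (k + 1) i) : ℝ)
          = ∑ i : Fin n, (inner ℝ (X (k + 1) i - X (k + 2) i) (-M (k + 1)) : ℝ) := by
            refine Finset.sum_congr rfl fun i _ => by rw [hc i]
        _ = (inner ℝ (∑ i : Fin n, (X (k + 1) i - X (k + 2) i)) (-M (k + 1)) : ℝ) := (sum_inner _ _ _).symm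
        _ = 0 := by
            rw [Finset.sum_sub_distrib, h1, h2, sub_zero, inner_zero_left]
    calc a (k + 1)
        = ∑ i : Fin n, (‖X (k + 2) i - X (k + 1) i‖ ^ 2 +
            2 * (inner ℝ (X (k + 1) i - X (k + 2) i) (X (k + 2) i - Y (k + 1) i) : ℝ) +
            ‖Y (k + 1) i - X (k + 2) i‖ ^ 2) :=
          Finset.sum_congr rfl fun i _ => expand i
      _ = (∑ i : Fin n, ‖X (k + 2) i - X (k + 1) i‖ ^ 2) +
            2 * (∑ i : Fin n, (inner ℝ (X (k + 1) i - X (k + 2) i) (X (k + 2) i - Y (k + 1) i) : ℝ)) +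
            b (k + 1) := by
          rw [Finset.sum_add_distrib, Finset.sum_add_distrib, Finset.mul_sum]
      _ = _ := by rw [hcross]; ring
  -- key inequality: normalization is the nearest point on the sphere
  have key2 : ∀ k, a (k + 1) ≤ b k := by
    intro k
    refine Finset.sum_le_sum fun i _ => ?_
    have hx : ‖X (k + 1) i‖ ≠ 0 := norm_ne_zero_iff.mpr (hnz (k + 1) i)
    have hL : ‖X (k + 1) i - Y (k + 1) i‖ ^ 2 = (‖X (k + 1) i‖ - 1) ^ 2 := by
      have h1 : X (k + 1) i - Y (k + 1) i = (1 - ‖X (k + 1) i‖⁻¹) • X (k + 1) i := by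
        simp [hYdef, sub_smul, one_smul]
      rw [h1, norm_smul, Real.norm_eq_abs, mul_pow, sq_abs]
      field_simp
    have hR : ‖Y k i - X (k + 1) i‖ ^ 2 =
        1 - 2 * (inner ℝ (Y k i) (X (k + 1) i) : ℝ) + ‖X (k + 1) i‖ ^ 2 := by
      rw [norm_sub_sq_real, hnormY]
      ring
    have hCS : (inner ℝ (Y k i) (X (k + 1) i) : ℝ) ≤ ‖X (k + 1) i‖ := by
      have h := real_inner_le_norm (Y k i) (X (k + 1) i)
      rw [hnormY] at h
      linarith
    nlinarith [hL, hR, hCS]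
  have hba : ∀ k, b (k + 1) ≤ a (k + 1) := by
    intro k
    have := key1 k
    have := hDnonneg (k + 1)
    linarith
  set A : ℕ → ℝ := fun k => a (k + 1) with hAdef
  have hA_anti : Antitone A := by
    refine antitone_nat_of_succ_le fun k => ?_
    calc A (k + 1) = a (k + 2) := rfl
      _ ≤ b (k + 1) := key2 (k + 1)
      _ ≤ a (k + 1) := hba k
  have hA_bdd : BddBelow (Set.range A) := by
    refine ⟨0, fun x hx => ?_⟩
    obtain ⟨k, rfl⟩ := hx
    exact hanonneg (k + 1)
  have hAlim : Tendsto A atTop (nhds (⨅ k, A k)) := tendsto_atTop_ciInf hA_anti hA_bdd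
  have hA1lim : Tendsto (fun k => A (k + 1)) atTop (nhds (⨅ k, A k)) :=
    hAlim.comp (tendsto_add_atTop_nat 1)
  have hBlim : Tendsto (fun k => b (k + 1)) atTop (nhds (⨅ k, A k)) :=
    tendsto_of_tendsto_of_tendsto_of_le_of_le hA1lim hAlim
      (fun k => key2 (k + 1)) (fun k => hba k)
  have hDlim : Tendsto (fun k => ∑ i : Fin n, ‖X (k + 1 + 1) i - X (k + 1) i‖ ^ 2)
      atTop (nhds 0) := by
    have heq : (fun k => ∑ i : Fin n, ‖X (k + 1 + 1) i - X (k + 1) i‖ ^ 2) =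
        fun k => A k - b (k + 1) := by
      funext k
      have := key1 k
      simp only [hAdef]
      linarith
    rw [heq]
    have := hAlim.sub hBlim
    simpa using this
  exact (tendsto_add_atTop_iff_nat 1).mp hDlim
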